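/- Let x and y be real numbers, each of which has a signed digit representation. Then the product x · y has a signed digit representation. -/

import Mathlib

/-- A real number has a signed digit representation if it is the sum of a
series of digits in {-1, 0, 1} weighted by powers of 1/2. -/
def HasSDR (x : ℝ) : Prop :=
  ∃ d : ℕ → ℤ, (∀ i, d i = -1 ∨ d i = 0 ∨ d i = 1) ∧
    x = ∑' i : ℕ, (d i : ℝ) / 2 ^ (i + 1)

lemma sdr_tsum_half : ∑' i : ℕ, (1:ℝ) / 2 ^ (i + 1) = 1 := by
  calc ∑' i : ℕ, (1:ℝ) / 2 ^ (i + 1) = ∑' n : ℕ, (1:ℝ) / 2 / 2 ^ n :=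
        tsum_congr fun i => by rw [pow_succ]; ring
    _ = 1 := tsum_geometric_two' 1

lemma sdr_bound (d : ℕ → ℤ) (hd : ∀ i, d i = -1 ∨ d i = 0 ∨ d i = 1) (i : ℕ) :
    |(d i : ℝ) / 2 ^ (i + 1)| ≤ (1:ℝ) / 2 ^ (i + 1) := by
  have h1 : |(d i : ℝ)| ≤ 1 := by rcases hd i with h | h | h <;> simp [h]
  rw [abs_div, abs_of_nonneg (by positivity : (0:ℝ) ≤ 2 ^ (i+1))]
  exact div_le_div_of_nonneg_right h1 (by positivity)

lemma sdr_summable_half : Summable (fun i : ℕ => (1:ℝ) / 2 ^ (i + 1)) := by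
  refine ((summable_geometric_two).mul_left (1/2)).congr (fun i => ?_)
  rw [pow_succ]; field_simp; rw [← mul_pow]; norm_num

lemma sdr_summable (d : ℕ → ℤ) (hd : ∀ i, d i = -1 ∨ d i = 0 ∨ d i = 1) :
    Summable (fun i : ℕ => (d i : ℝ) / 2 ^ (i + 1)) := by
  apply Summable.of_abs
  exact Summable.of_nonneg_of_le (fun i => abs_nonneg _) (sdr_bound d hd) sdr_summable_half

lemma sdr_abs_le (x : ℝ) (hx : HasSDR x) : |x| ≤ 1 := by
  obtain ⟨d, hd, rfl⟩ := hx
  have hs := sdr_summable d hd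
  calc |∑' i : ℕ, (d i : ℝ) / 2 ^ (i + 1)|
      ≤ ∑' i : ℕ, |(d i : ℝ) / 2 ^ (i + 1)| := by
        have hsn : Summable (fun i : ℕ => ‖(d i : ℝ) / 2 ^ (i + 1)‖) := by
          simpa only [Real.norm_eq_abs] using hs.abs
        calc |∑' i : ℕ, (d i : ℝ) / 2 ^ (i + 1)|
            = ‖∑' i : ℕ, (d i : ℝ) / 2 ^ (i + 1)‖ := (Real.norm_eq_abs _).symm
          _ ≤ ∑' i : ℕ, ‖(d i : ℝ) / 2 ^ (i + 1)‖ := norm_tsum_le_tsum_norm hsn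
          _ = ∑' i : ℕ, |(d i : ℝ) / 2 ^ (i + 1)| :=
              tsum_congr fun i => Real.norm_eq_abs _
    _ ≤ ∑' i : ℕ, (1:ℝ) / 2 ^ (i + 1) :=
        Summable.tsum_le_tsum (sdr_bound d hd) hs.abs sdr_summable_half
    _ = 1 := sdr_tsum_half

lemma floor_sub_two_floor (s : ℝ) : ⌊2*s⌋ - 2*⌊s⌋ = 0 ∨ ⌊2*s⌋ - 2*⌊s⌋ = 1 := by
  have h1 : (2:ℝ)*⌊s⌋ ≤ 2*s := by
    have := Int.floor_le s; linarith
  have h2 : 2*s < 2*⌊s⌋ + 2 := by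
    have := Int.lt_floor_add_one s; linarith
  have h3 : (2*⌊s⌋ : ℤ) ≤ ⌊2*s⌋ := by
    rw [Int.le_floor]; push_cast; linarith
  have h4 : ⌊2*s⌋ < 2*⌊s⌋ + 2 := by
    rw [Int.floor_lt]; push_cast; linarith
  omega

lemma sdr_geom_partial (n : ℕ) :
    ∑ i ∈ Finset.range n, (1:ℝ) / 2 ^ (i+1) = 1 - (1/2)^n := by
  induction n with
  | zero => simp
  | succ m ih => rw [Finset.sum_range_succ, ih]; simp only [one_div, inv_pow, pow_succ]; ring

lemma sdr_of_abs_le (x : ℝ) (hx : |x| ≤ 1) : HasSDR x := by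
  by_cases hx1 : x = 1
  · refine ⟨fun _ => 1, fun _ => by simp, ?_⟩
    rw [hx1, ← sdr_tsum_half]
    exact tsum_congr fun i => by norm_num
  · set t : ℝ := (x + 1) / 2 with ht
    have ht0 : 0 ≤ t := by rw [abs_le] at hx; rw [ht]; linarith [hx.1]
    have ht1 : t < 1 := by
      rw [abs_le] at hx
      rcases lt_or_eq_of_le hx.2 with h | h
      · rw [ht]; linarith
      · exact absurd h hx1
    set b : ℕ → ℤ := fun i => ⌊2^(i+1) * t⌋ - 2 * ⌊2^i * t⌋ with hb
    have hb01 : ∀ i, b i = 0 ∨ b i = 1 := by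
      intro i
      have := floor_sub_two_floor (2^i * t)
      simpa [hb, pow_succ, mul_assoc, mul_comm (2:ℝ)] using this
    refine ⟨fun i => 2 * b i - 1, fun i => by rcases hb01 i with h | h <;> simp [h], ?_⟩
    have hsum : Summable (fun i : ℕ => ((2 * b i - 1 : ℤ) : ℝ) / 2 ^ (i + 1)) :=
      sdr_summable _ (fun i => by rcases hb01 i with h | h <;> simp [h])
    symm
    apply HasSum.tsum_eq
    rw [hsum.hasSum_iff_tendsto_nat]
    have key : ∀ n : ℕ, ∑ i ∈ Finset.range n, ((2 * b i - 1 : ℤ) : ℝ) / 2 ^ (i + 1)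
        = 2 * ((⌊2^n * t⌋ : ℝ) / 2^n) - (1 - (1/2)^n) := by
      intro n
      have hb' : ∀ i : ℕ, ((b i : ℝ)) / 2 ^ (i+1)
          = (⌊2^(i+1) * t⌋ : ℝ) / 2^(i+1) - (⌊2^i * t⌋ : ℝ) / 2^i := by
        intro i
        rw [hb]
        push_cast
        field_simp
        ring
      have htel : ∑ i ∈ Finset.range n, ((b i : ℝ)) / 2 ^ (i+1)
          = (⌊2^n * t⌋ : ℝ) / 2^n - (⌊(2:ℝ)^0 * t⌋ : ℝ) / 2^0 := by
        rw [← Finset.sum_range_sub (fun i => (⌊(2:ℝ)^i * t⌋ : ℝ) / 2^i) n]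
        exact Finset.sum_congr rfl (fun i _ => hb' i)
      have hfloor0 : ⌊(2:ℝ)^0 * t⌋ = 0 := by
        rw [pow_zero, one_mul, Int.floor_eq_zero_iff]
        constructor <;> simp [ht0, ht1]
      calc ∑ i ∈ Finset.range n, ((2 * b i - 1 : ℤ) : ℝ) / 2 ^ (i + 1)
          = 2 * ∑ i ∈ Finset.range n, ((b i : ℝ)) / 2 ^ (i+1)
            - ∑ i ∈ Finset.range n, (1:ℝ) / 2 ^ (i+1) := by
            rw [Finset.mul_sum, ← Finset.sum_sub_distrib]
            exact Finset.sum_congr rfl (fun i _ => by push_cast; ring)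
        _ = 2 * ((⌊2^n * t⌋ : ℝ) / 2^n) - (1 - (1/2)^n) := by
            rw [htel, sdr_geom_partial, hfloor0]; norm_num
    simp only [key]
    have hfl : Filter.Tendsto (fun n : ℕ => (⌊2^n * t⌋ : ℝ) / 2^n) Filter.atTop (nhds t) := by
      have hlow : ∀ n : ℕ, t - (1/2)^n ≤ (⌊2^n * t⌋ : ℝ) / 2^n := by
        intro n
        have hp : (0:ℝ) < 2^n := by positivity
        rw [sub_le_iff_le_add, div_pow, one_pow, ← add_div, le_div_iff₀ hp]
        have := Int.lt_floor_add_one ((2:ℝ)^n * t)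
        nlinarith
      have hup : ∀ n : ℕ, (⌊2^n * t⌋ : ℝ) / 2^n ≤ t := by
        intro n
        have hp : (0:ℝ) < 2^n := by positivity
        rw [div_le_iff₀ hp]
        have := Int.floor_le ((2:ℝ)^n * t)
        linarith
      have hhalf : Filter.Tendsto (fun n : ℕ => (1/2:ℝ)^n) Filter.atTop (nhds 0) := by
        apply tendsto_pow_atTop_nhds_zero_of_lt_one <;> norm_num
      apply tendsto_of_tendsto_of_tendsto_of_le_of_le
        (g := fun n : ℕ => t - (1/2:ℝ)^n) (h := fun _ : ℕ => t)
      · simpa using (tendsto_const_nhds (x := t)).sub hhalf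
      · exact tendsto_const_nhds
      · exact hlow
      · exact hup
    have hhalf : Filter.Tendsto (fun n : ℕ => (1/2:ℝ)^n) Filter.atTop (nhds 0) := by
      apply tendsto_pow_atTop_nhds_zero_of_lt_one <;> norm_num
    have hmain : Filter.Tendsto (fun n : ℕ => 2 * ((⌊2^n * t⌋ : ℝ) / 2^n) - (1 - (1/2:ℝ)^n))
        Filter.atTop (nhds (2 * t - (1 - 0))) :=
      (hfl.const_mul 2).sub ((tendsto_const_nhds (x := (1:ℝ))).sub hhalf)
    convert hmain using 2
    rw [ht]; ring

theorem sdr_mul (x y : ℝ) (hx : HasSDR x) (hy : HasSDR y) :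
    HasSDR (x * y) := by
  apply sdr_of_abs_le
  rw [abs_mul]
  exact mul_le_one₀ (sdr_abs_le x hx) (abs_nonneg y) (sdr_abs_le y hy)
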